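/- Suppose the family P_0(s) ∈ ℝ^N, P_j(s) ∈ ℝ^{N−j} (1 ≤ j ≤ N−1, s ∈ ℕ) satisfies the 1S first-step system and that every entry of every P_j(s) is nonnegative. Fix n ≥ 1 and assume that, for each 0 ≤ k ≤ n and each 0 ≤ j ≤ N−1, the factorial-moment vector φ^{(k)}_j := Σ_{s=0}^∞ s(s−1)⋯(s−k+1)·P_j(s) converges entrywise (with the convention that the weight is 1 when k = 0). Assume I_N − C0(0) − B0 is invertible, and define G_1 = I_{N−1} − B_1 − (1−δ_{1,N−1})C_1(0) and, for 2 ≤ j ≤ N−1, G_j = I_{N−j} − B_j − (1−δ_{j,N−1})C_j(0) − C_{j−1}(1)·G_{j−1}^{−1}·C_j(2); assume each G_j is invertible. Then: φ^{(n)}_0 = n·(I_N − C0(0) − B0)^{−1}·B0·φ^{(n−1)}_0, and for 1 ≤ j ≤ N−1, φ^{(n)}_j = g^{(n)}_j + (1−δ_{j,N−1})·G_j^{−1}·C_{j+1}(2)·φ^{(n)}_{j+1}, where g^{(n)}_1 = G_1^{−1}·(n·B_1·φ^{(n−1)}_1 + C_0(1)·φ^{(n)}_0) and, for 2 ≤ j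 ≤ N−1, g^{(n)}_j = G_j^{−1}·(n·B_j·φ^{(n−1)}_j + C_{j−1}(1)·g^{(n)}_{j−1}). -/
import Mathlib


open Matrix

noncomputable section

/-- The model parameters of the two-strain hospital-ward Markov chain. -/
structure ModelParams where
  β : ℝ
  μ : ℝ
  γ : ℝ
  τ1 : ℝ
  τ2 : ℝ
  m : ℝ
  c : ℝ

/-- Positivity/range conditions on the parameters. -/
def ModelParams.Valid (π : ModelParams) : Prop :=
  0 < π.β ∧ 0 < π.μ ∧ 0 < π.γ ∧ 0 < π.τ1 ∧ 0 < π.τ2 ∧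
    π.m ∈ Set.Ioo (0:ℝ) 1 ∧ π.c ∈ Set.Ioo (0:ℝ) 1

/-- The total exit rate `q(i,j)` of state `(i,j)`. -/
def qr (N : ℕ) (π : ModelParams) (i j : ℕ) : ℝ :=
  ((N : ℝ) - i) * (((i : ℝ) - j * π.c) * π.β + π.m * π.μ)
    + ((i : ℝ) - j) * (π.γ + π.τ1 + π.τ2 + (1 - π.m) * π.μ)
    + (j : ℝ) * (π.γ + π.τ2 + π.μ)

/-- The matrix `B_j` (Appendix A/B; `B_0` for `j = 0`), 0-based indexing: the 1-based
row index `i` corresponds to `k + 1` for `k : Fin (N - j)`. -/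
def Bm (N : ℕ) (π : ModelParams) (j : ℕ) : Matrix (Fin (N - j)) (Fin (N - j)) ℝ :=
  fun k l =>
    if (l : ℕ) = (k : ℕ) then π.m * π.μ / qr N π (j + (k : ℕ) + 1) j
    else if (l : ℕ) = (k : ℕ) + 1 then
      ((N : ℝ) - j - ((k : ℕ) + 1)) * π.β / qr N π (j + (k : ℕ) + 1) j
    else 0

/-- The matrix `C_j(0)` (Appendix A/B; `C_0(0)` for `j = 0`). -/
def Cm0 (N : ℕ) (π : ModelParams) (j : ℕ) : Matrix (Fin (N - j)) (Fin (N - j)) ℝ :=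
  fun k l =>
    if (l : ℕ) + 1 = (k : ℕ) then
      ((k : ℕ) : ℝ) * (π.γ + π.τ1 + π.τ2 + (1 - π.m) * π.μ) / qr N π (j + (k : ℕ) + 1) j
    else if (l : ℕ) = (k : ℕ) then
      (((N : ℝ) - j - ((k : ℕ) + 1)) * (1 - π.m) * π.μ + ((k : ℕ) : ℝ) * π.m * π.μ)
        / qr N π (j + (k : ℕ) + 1) j
    else if (l : ℕ) = (k : ℕ) + 1 then
      ((N : ℝ) - j - ((k : ℕ) + 1)) * (((k : ℕ) : ℝ) * π.β + π.m * π.μ)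
        / qr N π (j + (k : ℕ) + 1) j
    else 0

/-- The matrix `C_{j-1}(1)` (Appendix B), of dimension `(N-j) × (N-(j-1))`. -/
def Cm1 (N : ℕ) (π : ModelParams) (j : ℕ) :
    Matrix (Fin (N - j)) (Fin (N - (j - 1))) ℝ :=
  fun k l =>
    if (l : ℕ) = (k : ℕ) then
      (j : ℝ) * (π.γ + π.τ2 + (1 - π.m) * π.μ) / qr N π (j + (k : ℕ) + 1) j
    else if (l : ℕ) = (k : ℕ) + 1 then
      (j : ℝ) * π.m * π.μ / qr N π (j + (k : ℕ) + 1) j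
    else 0

/-- The matrix `C_{j+1}(2)` (Appendix B), of dimension `(N-j) × (N-(j+1))`. -/
def Cm2 (N : ℕ) (π : ModelParams) (j : ℕ) :
    Matrix (Fin (N - j)) (Fin (N - (j + 1))) ℝ :=
  fun k l =>
    if (l : ℕ) = (k : ℕ) then
      ((N : ℝ) - j - ((k : ℕ) + 1)) * j * (1 - π.c) * π.β / qr N π (j + (k : ℕ) + 1) j
    else 0

/-- The vector `p_{j,1_S}` (Appendix A/B). -/
def pS (N : ℕ) (π : ModelParams) (j : ℕ) : Fin (N - j) → ℝ :=
  fun k => (π.γ + π.τ1 + π.τ2 + (1 - π.m) * π.μ) / qr N π (j + (k : ℕ) + 1) j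

/-- The matrix `E_j` (Appendix C), diagonal, of dimension `(N-j+1) × (N-(j-1))`;
the 1-based row index `k` corresponds to state `(j-1+k, j)`. -/
def Em (N : ℕ) (π : ModelParams) (j : ℕ) :
    Matrix (Fin (N - j + 1)) (Fin (N - (j - 1))) ℝ :=
  fun k l =>
    if (l : ℕ) = (k : ℕ) then π.m * π.μ / qr N π (j + (k : ℕ)) j else 0

/-- The matrix `F_j` (Appendix C), of dimension `(N-j+1) × (N-j)`. -/
def Fm (N : ℕ) (π : ModelParams) (j : ℕ) :
    Matrix (Fin (N - j + 1)) (Fin (N - (j + 1) + 1)) ℝ :=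
  fun k l =>
    if (l : ℕ) = (k : ℕ) then
      ((N : ℝ) - j - (k : ℕ)) * (1 - π.c) * π.β / qr N π (j + (k : ℕ)) j
    else 0

/-- The matrix `D_j(0)` (Appendix C). -/
def Dm0 (N : ℕ) (π : ModelParams) (j : ℕ) :
    Matrix (Fin (N - j + 1)) (Fin (N - j + 1)) ℝ :=
  fun k l =>
    if (l : ℕ) + 1 = (k : ℕ) then
      ((k : ℕ) : ℝ) * (π.γ + π.τ1 + π.τ2 + (1 - π.m) * π.μ) / qr N π (j + (k : ℕ)) j
    else if (l : ℕ) = (k : ℕ) then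
      (((N : ℝ) - j - (k : ℕ)) * (1 - π.m) * π.μ + ((k : ℕ) : ℝ) * π.m * π.μ)
        / qr N π (j + (k : ℕ)) j
    else if (l : ℕ) = (k : ℕ) + 1 then
      ((N : ℝ) - j - (k : ℕ)) * (((k : ℕ) : ℝ) * π.β + π.m * π.μ) / qr N π (j + (k : ℕ)) j
    else 0

/-- The matrix `D_{j-1}(1)` (Appendix C), of dimension `(N-j+1) × (N-j+2)`. -/
def Dm1 (N : ℕ) (π : ModelParams) (j : ℕ) :
    Matrix (Fin (N - j + 1)) (Fin (N - (j - 1) + 1)) ℝ :=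
  fun k l =>
    if (l : ℕ) = (k : ℕ) then
      ((j : ℝ) - 1) * (π.γ + π.τ2 + (1 - π.m) * π.μ) / qr N π (j + (k : ℕ)) j
    else if (l : ℕ) = (k : ℕ) + 1 then
      ((j : ℝ) - 1) * π.m * π.μ / qr N π (j + (k : ℕ)) j
    else 0

/-- The matrix `D_{j+1}(2)` (Appendix C), of dimension `(N-j+1) × (N-j)`. -/
def Dm2 (N : ℕ) (π : ModelParams) (j : ℕ) :
    Matrix (Fin (N - j + 1)) (Fin (N - (j + 1) + 1)) ℝ :=
  fun k l =>
    if (l : ℕ) = (k : ℕ) then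
      ((N : ℝ) - j - (k : ℕ)) * ((j : ℝ) - 1) * (1 - π.c) * π.β / qr N π (j + (k : ℕ)) j
    else 0

/-- The vector `p_{j,1_R}` (Section 3.2). -/
def pR (N : ℕ) (π : ModelParams) (j : ℕ) : Fin (N - j + 1) → ℝ :=
  fun k => (π.γ + π.τ2 + (1 - π.m) * π.μ) / qr N π (j + (k : ℕ)) j

/-- The `1S` first-step system (equations (1)–(4) of the paper) for the family of
conditional-probability vectors `P j s = P_{j,1_S}(s)`, `0 ≤ j ≤ N−1`. -/
def OneSSystem (N : ℕ) (π : ModelParams)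
    (P : (j : ℕ) → ℕ → Fin (N - j) → ℝ) : Prop :=
  IsUnit (1 - Cm0 N π 0) ∧
  (∀ s : ℕ, P 0 s = (1 - Cm0 N π 0)⁻¹.mulVec
      (if s = 0 then pS N π 0 else (Bm N π 0).mulVec (P 0 (s - 1)))) ∧
  (∀ j s : ℕ, j + 1 ≤ N - 1 →
    P (j + 1) s
      = (if s = 0 then pS N π (j + 1) else (Bm N π (j + 1)).mulVec (P (j + 1) (s - 1)))
        + (Cm1 N π (j + 1)).mulVec (P j s)
        + (if j + 1 = N - 1 then 0 else
            (Cm0 N π (j + 1)).mulVec (P (j + 1) s)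
              + (Cm2 N π (j + 1)).mulVec (P (j + 2) s)))

/-- The `(·,0)`-system (Theorem 2 of the paper) for the vectors
`PR j s = P_{j,1_R}(s,0)`, `1 ≤ j ≤ N`, coupled with a `1S` family `P`. -/
def RZeroSystem (N : ℕ) (π : ModelParams)
    (P : (j : ℕ) → ℕ → Fin (N - j) → ℝ)
    (PR : (j : ℕ) → ℕ → Fin (N - j + 1) → ℝ) : Prop :=
  (∀ s : ℕ, PR 1 s = (Dm0 N π 1).mulVec (PR 1 s)
      + (if s = 0 then pR N π 1 else (Em N π 1).mulVec (P 0 (s - 1)))) ∧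
  (∀ j s : ℕ, 1 ≤ j → j + 1 ≤ N →
    PR (j + 1) s
      = (if s = 0 then pR N π (j + 1) else (Em N π (j + 1)).mulVec (P j (s - 1)))
        + (Dm1 N π (j + 1)).mulVec (PR j s)
        + (if j + 1 = N then 0 else
            (Dm0 N π (j + 1)).mulVec (PR (j + 1) s)
              + (Dm2 N π (j + 1)).mulVec (PR (j + 2) s)))

/-- The `(·,r)`-system for `r ≥ 1` (Theorem 3 of the paper) for the vectors
`PR j s r = P_{j,1_R}(s,r)`, `1 ≤ j ≤ N`. -/
def RPosSystem (N : ℕ) (π : ModelParams)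
    (PR : (j : ℕ) → ℕ → ℕ → Fin (N - j + 1) → ℝ) : Prop :=
  (∀ s r : ℕ, PR 1 s (r + 1) = (Dm0 N π 1).mulVec (PR 1 s (r + 1))
      + (Fm N π 1).mulVec (PR 2 s r)) ∧
  (∀ j s r : ℕ, 1 ≤ j → j + 1 ≤ N →
    PR (j + 1) s (r + 1)
      = (if j + 1 = N then 0 else (Fm N π (j + 1)).mulVec (PR (j + 2) s r))
        + (Dm1 N π (j + 1)).mulVec (PR j s (r + 1))
        + (if j + 1 = N then 0 else
            (Dm0 N π (j + 1)).mulVec (PR (j + 1) s (r + 1))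
              + (Dm2 N π (j + 1)).mulVec (PR (j + 2) s (r + 1))))

lemma HasSum.congr' {V : Type*} [AddCommMonoid V] [TopologicalSpace V]
    {f g : ℕ → V} {a : V} (hf : HasSum f a) (h : ∀ s, f s = g s) : HasSum g a :=
  (funext h : f = g) ▸ hf

lemma descFact_add (s m : ℕ) :
    (s + 1).descFactorial (m + 1)
      = s.descFactorial (m + 1) + (m + 1) * s.descFactorial m := by
  rw [Nat.succ_descFactorial_succ, Nat.descFactorial_succ]
  rcases le_or_gt m s with h | h
  · have hs : s - m + (m + 1) = s + 1 := by omega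
    rw [← hs, add_mul]
  · rw [Nat.descFactorial_eq_zero_iff_lt.mpr h]
    simp [Nat.sub_eq_zero_of_le h.le]

lemma hasSum_mulVec {m k : ℕ} (M : Matrix (Fin m) (Fin k) ℝ)
    {f : ℕ → Fin k → ℝ} {a : Fin k → ℝ} (h : HasSum f a) :
    HasSum (fun s => M.mulVec (f s)) (M.mulVec a) := by
  rw [Pi.hasSum] at h ⊢
  intro i
  have := hasSum_sum (f := fun l s => M i l * f s l) (a := fun l => M i l * a l)
    (s := Finset.univ) (fun l _ => (h l).mul_left (M i l))
  simpa [Matrix.mulVec, dotProduct] using this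

lemma eq_inv_mulVec {m : ℕ} {M : Matrix (Fin m) (Fin m) ℝ} (hM : IsUnit M)
    {v w : Fin m → ℝ} (h : M.mulVec v = w) : v = M⁻¹.mulVec w := by
  rw [← h, Matrix.mulVec_mulVec,
    Matrix.nonsing_inv_mul _ ((Matrix.isUnit_iff_isUnit_det _).mp hM),
    Matrix.one_mulVec]

lemma hasSum_weighted_shift {m n : ℕ} (hn : 1 ≤ n)
    (B : Matrix (Fin m) (Fin m) ℝ) (p : Fin m → ℝ) (P : ℕ → Fin m → ℝ)
    {a b : Fin m → ℝ}
    (ha : HasSum (fun s => ((s.descFactorial n : ℕ) : ℝ) • P s) a)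
    (hb : HasSum (fun s => ((s.descFactorial (n - 1) : ℕ) : ℝ) • P s) b) :
    HasSum (fun s => ((s.descFactorial n : ℕ) : ℝ) •
        (if s = 0 then p else B.mulVec (P (s - 1)))) (B.mulVec (a + (n : ℝ) • b)) := by
  obtain ⟨k, rfl⟩ : ∃ k, n = k + 1 := ⟨n - 1, (Nat.succ_pred_eq_of_pos hn).symm⟩
  have hb' : HasSum (fun s => ((s.descFactorial k : ℕ) : ℝ) • P s) b := by
    simpa using hb
  have hfun : ∀ s : ℕ, (((s + 1).descFactorial (k + 1) : ℕ) : ℝ) • P s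
      = ((s.descFactorial (k + 1) : ℕ) : ℝ) • P s
        + ((k : ℝ) + 1) • (((s.descFactorial k : ℕ) : ℝ) • P s) := by
    intro s
    have hcast : (((s.descFactorial (k + 1) + (k + 1) * s.descFactorial k : ℕ)) : ℝ)
        = ((s.descFactorial (k + 1) : ℕ) : ℝ)
          + ((k : ℝ) + 1) * ((s.descFactorial k : ℕ) : ℝ) := by push_cast; ring
    rw [descFact_add, hcast, add_smul, mul_smul]
  have hc : HasSum (fun s => (((s + 1).descFactorial (k + 1) : ℕ) : ℝ) • P s)
      (a + ((k : ℝ) + 1) • b) := by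
    have h2 := ha.add (hb'.const_smul ((k : ℝ) + 1))
    exact h2.congr' fun s => (hfun s).symm
  have hB := hasSum_mulVec B hc
  set f : ℕ → Fin m → ℝ := fun s => ((s.descFactorial (k + 1) : ℕ) : ℝ) •
      (if s = 0 then p else B.mulVec (P (s - 1))) with hf
  have hshift : HasSum (fun s => f (s + 1)) (B.mulVec (a + ((k : ℝ) + 1) • b)) := by
    refine hB.congr' fun s => ?_
    simp only [hf, Nat.succ_ne_zero, if_false, Nat.succ_sub_one, Matrix.mulVec_smul]
  have hfin := (hasSum_nat_add_iff (f := f) 1).mp hshift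
  have hf0 : f 0 = 0 := by
    rw [hf]; simp
  rw [Finset.range_one, Finset.sum_singleton, hf0, add_zero] at hfin
  have hcast2 : ((k : ℝ) + 1) = ((k + 1 : ℕ) : ℝ) := by push_cast; ring
  rw [hcast2] at hfin
  exact hfin

/-- **Corollary 1 of the paper.** Recursive computation of the factorial
moments `φ⁽ⁿ⁾_j = Σ_s s(s−1)⋯(s−n+1) P_j(s)` of a nonnegative `1S` family:
`φ⁽ⁿ⁾_0 = n (I − C₀(0) − B₀)⁻¹ B₀ φ⁽ⁿ⁻¹⁾_0`, and for `1 ≤ j ≤ N−1`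
`φ⁽ⁿ⁾_j = g⁽ⁿ⁾_j + (1−δ_{j,N−1}) G_j⁻¹ C_{j+1}(2) φ⁽ⁿ⁾_{j+1}`. -/
theorem oneS_factorial_moments
    (N : ℕ) (hN : 2 ≤ N) (π : ModelParams) (hπ : π.Valid)
    (P : (j : ℕ) → ℕ → Fin (N - j) → ℝ)
    (hP : OneSSystem N π P)
    (hPnn : ∀ j : ℕ, j ≤ N - 1 → ∀ (s : ℕ) (i : Fin (N - j)), 0 ≤ P j s i)
    (n : ℕ) (hn : 1 ≤ n)
    (φ : ℕ → (j : ℕ) → Fin (N - j) → ℝ)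
    (hφ : ∀ k : ℕ, k ≤ n → ∀ j : ℕ, j ≤ N - 1 → ∀ i : Fin (N - j),
      HasSum (fun s : ℕ => ((s.descFactorial k : ℕ) : ℝ) * P j s i) (φ k j i))
    (hinv : IsUnit (1 - Cm0 N π 0 - Bm N π 0))
    (G : (j : ℕ) → Matrix (Fin (N - j)) (Fin (N - j)) ℝ)
    (hG1 : G 1 = 1 - Bm N π 1 - (if 1 = N - 1 then 0 else Cm0 N π 1))
    (hGrec : ∀ j : ℕ, 1 ≤ j → j + 1 ≤ N - 1 →
      G (j + 1) = 1 - Bm N π (j + 1) - (if j + 1 = N - 1 then 0 else Cm0 N π (j + 1))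
        - (show Matrix (Fin (N - (j + 1))) (Fin (N - j)) ℝ from Cm1 N π (j + 1))
            * (G j)⁻¹ * Cm2 N π j)
    (hGinv : ∀ j : ℕ, 1 ≤ j → j ≤ N - 1 → IsUnit (G j))
    (g : (j : ℕ) → Fin (N - j) → ℝ)
    (hg1 : g 1 = (G 1)⁻¹.mulVec
      ((n : ℝ) • (Bm N π 1).mulVec (φ (n - 1) 1) + (Cm1 N π 1).mulVec (φ n 0)))
    (hgrec : ∀ j : ℕ, 1 ≤ j → j + 1 ≤ N - 1 →
      g (j + 1) = (G (j + 1))⁻¹.mulVec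
        ((n : ℝ) • (Bm N π (j + 1)).mulVec (φ (n - 1) (j + 1))
          + (Cm1 N π (j + 1)).mulVec (g j))) :
    φ n 0 = (n : ℝ) • ((1 - Cm0 N π 0 - Bm N π 0)⁻¹ * Bm N π 0).mulVec (φ (n - 1) 0) ∧
    ∀ j : ℕ, 1 ≤ j → j ≤ N - 1 →
      φ n j = g j
        + (if j = N - 1 then 0 else ((G j)⁻¹ * Cm2 N π j).mulVec (φ n (j + 1))) := by
  obtain ⟨hU, h0, hrec⟩ := hP
  have hΦ : ∀ k : ℕ, k ≤ n → ∀ j : ℕ, j ≤ N - 1 →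
      HasSum (fun s => ((s.descFactorial k : ℕ) : ℝ) • P j s) (φ k j) := by
    intro k hk j hj
    rw [Pi.hasSum]
    intro i
    simpa [Pi.smul_apply, smul_eq_mul] using hφ k hk j hj i
  -- the summed equation for j = 0
  have key0 : φ n 0 = (1 - Cm0 N π 0)⁻¹.mulVec
      ((Bm N π 0).mulVec (φ n 0 + (n : ℝ) • φ (n - 1) 0)) := by
    have hs := hasSum_weighted_shift hn (Bm N π 0) (pS N π 0) (P 0)
      (hΦ n le_rfl 0 (Nat.zero_le _)) (hΦ (n - 1) (Nat.sub_le _ _) 0 (Nat.zero_le _))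
    have hs2 := hasSum_mulVec (1 - Cm0 N π 0)⁻¹ hs
    have hs3 := hs2.congr' (g := fun s => ((s.descFactorial n : ℕ) : ℝ) • P 0 s)
      (fun s => by rw [Matrix.mulVec_smul, ← h0 s])
    exact (hΦ n le_rfl 0 (Nat.zero_le _)).unique hs3
  have goal0 : φ n 0
      = (n : ℝ) • ((1 - Cm0 N π 0 - Bm N π 0)⁻¹ * Bm N π 0).mulVec (φ (n - 1) 0) := by
    have hAdet : IsUnit (1 - Cm0 N π 0).det := (Matrix.isUnit_iff_isUnit_det _).mp hU
    have h1 : (1 - Cm0 N π 0).mulVec (φ n 0)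
        = (Bm N π 0).mulVec (φ n 0) + (n : ℝ) • (Bm N π 0).mulVec (φ (n - 1) 0) := by
      nth_rewrite 1 [key0]
      rw [Matrix.mulVec_mulVec, Matrix.mul_nonsing_inv _ hAdet, Matrix.one_mulVec,
        Matrix.mulVec_add, Matrix.mulVec_smul]
    have h2 : (1 - Cm0 N π 0 - Bm N π 0).mulVec (φ n 0)
        = (n : ℝ) • (Bm N π 0).mulVec (φ (n - 1) 0) := by
      rw [Matrix.sub_mulVec, h1]
      abel
    rw [eq_inv_mulVec hinv h2, Matrix.mulVec_smul, Matrix.mulVec_mulVec]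
  -- the summed equation for 1 ≤ j ≤ N - 1
  have keyJ : ∀ j' : ℕ, j' + 1 ≤ N - 1 →
      φ n (j' + 1) = (Bm N π (j' + 1)).mulVec (φ n (j' + 1) + (n : ℝ) • φ (n - 1) (j' + 1))
        + (show Matrix (Fin (N - (j' + 1))) (Fin (N - j')) ℝ from
            Cm1 N π (j' + 1)).mulVec (φ n j')
        + (if j' + 1 = N - 1 then 0 else
            (Cm0 N π (j' + 1)).mulVec (φ n (j' + 1))
              + (Cm2 N π (j' + 1)).mulVec (φ n (j' + 2))) := by
    intro j' hj2
    have t1 := hasSum_weighted_shift hn (Bm N π (j' + 1)) (pS N π (j' + 1)) (P (j' + 1))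
      (hΦ n le_rfl (j' + 1) hj2) (hΦ (n - 1) (Nat.sub_le _ _) (j' + 1) hj2)
    have t2 := hasSum_mulVec
      (show Matrix (Fin (N - (j' + 1))) (Fin (N - j')) ℝ from Cm1 N π (j' + 1))
      (hΦ n le_rfl j' (by omega))
    have t3 : HasSum (fun s => ((s.descFactorial n : ℕ) : ℝ) •
        (if j' + 1 = N - 1 then (0 : Fin (N - (j' + 1)) → ℝ) else
          (Cm0 N π (j' + 1)).mulVec (P (j' + 1) s) + (Cm2 N π (j' + 1)).mulVec (P (j' + 2) s)))
        (if j' + 1 = N - 1 then 0 else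
          (Cm0 N π (j' + 1)).mulVec (φ n (j' + 1)) + (Cm2 N π (j' + 1)).mulVec (φ n (j' + 2))) := by
      by_cases hje : j' + 1 = N - 1
      · simp only [if_pos hje, smul_zero]
        exact hasSum_zero
      · simp only [if_neg hje]
        have t3a := hasSum_mulVec (Cm0 N π (j' + 1)) (hΦ n le_rfl (j' + 1) hj2)
        have t3b := hasSum_mulVec (Cm2 N π (j' + 1)) (hΦ n le_rfl (j' + 2) (by omega))
        refine (t3a.add t3b).congr' fun s => ?_
        rw [Matrix.mulVec_smul, Matrix.mulVec_smul, ← smul_add]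
    have total := ((t1.add (t2.congr' fun s => (Matrix.mulVec_smul _ _ _))).add t3).congr'
      (g := fun s => ((s.descFactorial n : ℕ) : ℝ) • P (j' + 1) s) fun s => by
        beta_reduce
        conv_rhs => rw [hrec j' s hj2]
        rw [smul_add, smul_add]
    exact (hΦ n le_rfl (j' + 1) hj2).unique total
  refine ⟨goal0, ?_⟩
  intro j
  induction j with
  | zero => intro h1 _; omega
  | succ j ih =>
    intro hj1 hj2
    rcases Nat.eq_zero_or_pos j with rfl | hjpos
    · -- base case j = 1
      have k1 := keyJ 0 (by omega)
      simp only [zero_add] at k1 ⊢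
      by_cases h1N : 1 = N - 1
      · have hGv : (G 1).mulVec (φ n 1)
            = (n : ℝ) • (Bm N π 1).mulVec (φ (n - 1) 1) + (Cm1 N π 1).mulVec (φ n 0) := by
          rw [hG1, if_pos h1N, sub_zero, Matrix.sub_mulVec, Matrix.one_mulVec]
          nth_rewrite 1 [k1]
          rw [if_pos h1N, add_zero, Matrix.mulVec_add, Matrix.mulVec_smul]
          abel
        rw [if_pos h1N, add_zero, hg1]
        exact eq_inv_mulVec (hGinv 1 le_rfl (by omega)) hGv
      · have hGv : (G 1).mulVec (φ n 1)
            = ((n : ℝ) • (Bm N π 1).mulVec (φ (n - 1) 1) + (Cm1 N π 1).mulVec (φ n 0))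
              + (Cm2 N π 1).mulVec (φ n 2) := by
          rw [hG1, if_neg h1N, Matrix.sub_mulVec, Matrix.sub_mulVec, Matrix.one_mulVec]
          nth_rewrite 1 [k1]
          rw [if_neg h1N, Matrix.mulVec_add (Bm N π 1), Matrix.mulVec_smul]
          abel
        rw [if_neg h1N, hg1]
        refine (eq_inv_mulVec (hGinv 1 le_rfl (by omega)) hGv).trans ?_
        rw [Matrix.mulVec_add, Matrix.mulVec_mulVec]
    · -- inductive step: from j to j + 1, with 1 ≤ j and j + 1 ≤ N - 1
      have hjne : ¬ (j = N - 1) := by omega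
      have ihe := ih hjpos (by omega)
      rw [if_neg hjne] at ihe
      have kj := keyJ j hj2
      have hGj := hGrec j hjpos hj2
      by_cases hjN : j + 1 = N - 1
      · have hGv : (G (j + 1)).mulVec (φ n (j + 1))
            = (n : ℝ) • (Bm N π (j + 1)).mulVec (φ (n - 1) (j + 1))
              + (show Matrix (Fin (N - (j + 1))) (Fin (N - j)) ℝ from
                  Cm1 N π (j + 1)).mulVec (g j) := by
          rw [hGj, if_pos hjN, sub_zero, Matrix.sub_mulVec, Matrix.sub_mulVec,
            Matrix.one_mulVec, Matrix.mul_assoc]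
          nth_rewrite 1 [kj]
          rw [if_pos hjN, add_zero, ihe, Matrix.mulVec_add (Bm N π (j + 1)),
            Matrix.mulVec_smul, Matrix.mulVec_add
              (show Matrix (Fin (N - (j + 1))) (Fin (N - j)) ℝ from Cm1 N π (j + 1)),
            Matrix.mulVec_mulVec]
          abel
        rw [if_pos hjN, add_zero, hgrec j hjpos hj2]
        exact eq_inv_mulVec (hGinv (j + 1) (by omega) (by omega)) hGv
      · have hGv : (G (j + 1)).mulVec (φ n (j + 1))
            = ((n : ℝ) • (Bm N π (j + 1)).mulVec (φ (n - 1) (j + 1))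
              + (show Matrix (Fin (N - (j + 1))) (Fin (N - j)) ℝ from
                  Cm1 N π (j + 1)).mulVec (g j))
              + (Cm2 N π (j + 1)).mulVec (φ n (j + 2)) := by
          rw [hGj, if_neg hjN, Matrix.sub_mulVec, Matrix.sub_mulVec, Matrix.sub_mulVec,
            Matrix.one_mulVec, Matrix.mul_assoc]
          nth_rewrite 1 [kj]
          rw [if_neg hjN, ihe, Matrix.mulVec_add (Bm N π (j + 1)),
            Matrix.mulVec_smul, Matrix.mulVec_add
              (show Matrix (Fin (N - (j + 1))) (Fin (N - j)) ℝ from Cm1 N π (j + 1)),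
            Matrix.mulVec_mulVec]
          abel
        rw [if_neg hjN, hgrec j hjpos hj2]
        refine (eq_inv_mulVec (hGinv (j + 1) (by omega) (by omega)) hGv).trans ?_
        rw [Matrix.mulVec_add, Matrix.mulVec_mulVec]
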